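/- Let n be a finite index type, let a be an arbitrary complex n×n matrix with entries a_{ik}, let d : n → ℝ, and let ρ = diagonal(d) be the real diagonal matrix with entries d_i (regarded as a complex matrix). Then tr(ρ·(Δρ)) = ∑_{i,k} |a_{ik}|²·(d_i·d_k - d_k²), where Δρ = aρa* - (1/2)a*aρ - (1/2)ρa*a. (Identity (3.4) for the alternative dissipation operator Δ, showing that the resulting quadratic form is not manifestly nonpositive.) -/

import Mathlib

open Matrix

/-- The alternative dissipation operator `Δ` of Quantum Optics (matrix version):
`Δρ = aρa* - ½a*aρ - ½ρa*a`. -/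
noncomputable def dissDelta {n : Type*} [Fintype n] [DecidableEq n] (a ρ : Matrix n n ℂ) : Matrix n n ℂ :=
  a * ρ * aᴴ - (1/2 : ℂ) • (aᴴ * a * ρ) - (1/2 : ℂ) • (ρ * (aᴴ * a))

/-- Identity (3.4): for `ρ = diagonal d` with real `d`,
`tr(ρ·Δρ) = ∑ᵢₖ |aᵢₖ|²(dᵢdₖ - dₖ²)`. -/
theorem trace_mul_dissDelta_diag_eq
    {n : Type*} [Fintype n] [DecidableEq n]
    (a : Matrix n n ℂ) (d : n → ℝ) (ρ : Matrix n n ℂ)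
    (hρ : ρ = Matrix.diagonal (fun i => (d i : ℂ))) :
    (ρ * dissDelta a ρ).trace
      = ((∑ i, ∑ k, ‖a i k‖ ^ 2 * (d i * d k - d k ^ 2) : ℝ) : ℂ) := by
  have habs : ∀ z : ℂ, ((‖z‖ : ℂ)) ^ 2 = z * (starRingEnd ℂ) z := by
    intro z
    rw [← Complex.ofReal_pow, Complex.sq_norm, ← Complex.mul_conj]
  have key : ∀ g : n → n → ℂ, (∑ x : n, ∑ k : n, (g k x + g x k)) = 2 * ∑ x : n, ∑ k : n, g x k := by
    intro g
    simp only [Finset.sum_add_distrib, two_mul]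
    congr 1
    exact Finset.sum_comm
  subst hρ
  simp only [dissDelta, trace, diag_apply, Matrix.mul_apply, Matrix.sub_apply,
    Matrix.smul_apply, diagonal_apply, conjTranspose_apply, Finset.mul_sum,
    Finset.sum_sub_distrib, smul_eq_mul, mul_ite, mul_zero, ite_mul, zero_mul,
    Finset.sum_ite_irrel, Finset.sum_ite_eq, Finset.sum_ite_eq', Finset.mem_univ, if_true]
  push_cast
  simp only [habs, mul_sub, sub_mul, Finset.mul_sum, Finset.sum_sub_distrib, Finset.sum_mul,
    Complex.star_def]
  rw [sub_sub]
  congr 1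
  · apply Finset.sum_congr rfl; intro x _; apply Finset.sum_congr rfl; intro k _
    ring
  · simp only [Finset.sum_const_zero, mul_ite, mul_zero, Finset.sum_ite_eq, Finset.mem_univ,
      if_true, Finset.mul_sum]
    conv_lhs => rw [Finset.sum_comm]
    rw [← Finset.sum_add_distrib]
    simp only [← Finset.sum_add_distrib]
    trans (∑ x : n, ∑ k : n,
        ((fun p q => ((d q : ℂ))^2 * ((starRingEnd ℂ) (a p q) * a p q) * (1/2)) k x
        + (fun p q => ((d q : ℂ))^2 * ((starRingEnd ℂ) (a p q) * a p q) * (1/2)) x k))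
    · apply Finset.sum_congr rfl; intro x _; apply Finset.sum_congr rfl; intro k _
      ring
    · rw [key, Finset.mul_sum]
      apply Finset.sum_congr rfl; intro x _
      rw [Finset.mul_sum]
      apply Finset.sum_congr rfl; intro k _
      ring
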